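/- In the de Bruijn graph of span n with maximal vertex m, define g(u) as the longest word that is both a prefix of m and a suffix of u, and α(u) = m_{|g(u)|+1}. Then for every arc (u,v) with label l(uv): (i) l(uv) ≤ α(u); (ii) if l(uv) < α(u) then g(v) is the empty word; (iii) if l(uv) = α(u) then g(v) = g(u)·l(uv). -/
import Mathlib

private lemma lex_drop_append {A : Type*} [LinearOrder A] :
    ∀ (p y z : List A), List.Lex (· < ·) (p ++ y) (p ++ z) → List.Lex (· < ·) y z := by
  intro p
  induction p with
  | nil => intro y z h; exact h
  | cons a p ih =>
    intro y z h
    cases h with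
    | rel h => exact absurd h (lt_irrefl a)
    | cons h => exact ih y z h

private lemma lt_of_lex_mid {A : Type*} [LinearOrder A] (p y z : List A) (b c : A) (hbc : b ≠ c)
    (h : List.Lex (· < ·) (p ++ b :: y) (p ++ c :: z)) : b < c := by
  have h' := lex_drop_append p _ _ h
  cases h' with
  | rel h => exact h
  | cons h => exact absurd rfl hbc

private lemma suffix_concat {A : Type*} (s t : List A) (b : A) (hs : s ≠ [])
    (h : s <:+ t ++ [b]) : ∃ s', s = s' ++ [b] ∧ s' <:+ t := by
  obtain ⟨r, hr⟩ := h
  have hdec : s.dropLast ++ [s.getLast hs] = s := List.dropLast_append_getLast hs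
  rw [← hdec] at hr
  rw [← List.append_assoc] at hr
  obtain ⟨h1, h2⟩ := List.append_inj' hr (by simp)
  refine ⟨s.dropLast, ?_, ⟨r, h1⟩⟩
  simp at h2
  rw [← h2]
  exact hdec.symm

/-- Height lemma for the de Bruijn graph of span `n`. `V` is the vertex set (allowed
`n`-words), `L` the set of allowed `(n+1)`-words (arcs go from `u` to `u.tail ++ [b]` with
label `b` whenever `u ++ [b] ∈ L`), `m` is the lexicographically maximal vertex,
`g u` is the longest word that is both a prefix of `m` and a suffix of `u`, and `α u` is
the letter of `m` following the prefix `g u`. Then for every arc `(u, v)` with label `b`: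
(i) `b ≤ α u`; (ii) if `b < α u` then `g v = ε`; (iii) if `b = α u` then `g v = g u ++ [b]`. -/
theorem deBruijn_height_lemma {A : Type*} [LinearOrder A] (n : ℕ)
    (L V : Set (List A)) (m : List A) (g : List A → List A) (α : List A → A)
    -- vertices are words of length n
    (hV : ∀ u ∈ V, u.length = n)
    -- heads of arcs are vertices
    (harc : ∀ u ∈ V, ∀ b : A, u ++ [b] ∈ L → u.tail ++ [b] ∈ V)
    -- every suffix of a vertex is a prefix of some vertex
    (hext : ∀ x ∈ V, ∀ s : List A, s <:+ x → ∃ y ∈ V, s <+: y)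
    -- m is the lexicographically maximal vertex
    (hm : m ∈ V)
    (hmax : ∀ u ∈ V, u = m ∨ List.Lex (· < ·) u m)
    -- g u is the longest common prefix-of-m / suffix-of-u word
    (hg : ∀ u ∈ V, g u <+: m ∧ g u <:+ u ∧
      ∀ s : List A, s <+: m → s <:+ u → s.length ≤ (g u).length)
    (hglen : ∀ u ∈ V, u ≠ m → (g u).length < n)
    -- α u is the letter of m following g u
    (hα : ∀ u ∈ V, u ≠ m → g u ++ [α u] <+: m) :
    ∀ u ∈ V, u ≠ m → ∀ b : A, u ++ [b] ∈ L →
      b ≤ α u ∧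
      (b < α u → g (u.tail ++ [b]) = []) ∧
      (b = α u → g (u.tail ++ [b]) = g u ++ [b]) := by
  intro u hu hum b hb
  have hv : u.tail ++ [b] ∈ V := harc u hu b hb
  obtain ⟨hgum, hguu, hgumax⟩ := hg u hu
  have hk : (g u).length < n := hglen u hu hum
  have hun : u.length = n := hV u hu
  -- g u is a suffix of u.tail
  have hgut : g u <:+ u.tail := by
    refine List.suffix_of_suffix_length_le hguu (List.tail_suffix u) ?_
    rw [List.length_tail, hun]
    omega
  have hguv : g u ++ [b] <:+ u.tail ++ [b] := by
    obtain ⟨t, ht⟩ := hgut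
    exact ⟨t, by rw [← ht]; simp⟩
  obtain ⟨r₂, hr₂⟩ := hα u hu hum
  -- (i)
  have part1 : b ≤ α u := by
    by_cases hcase : b = α u
    · exact le_of_eq hcase
    · obtain ⟨y, hy, hpy⟩ := hext _ hv (g u ++ [b]) hguv
      rcases hmax y hy with h | h
      · subst h
        have h2 : g u ++ [α u] <+: y := ⟨r₂, hr₂⟩
        have h3 := (List.prefix_of_prefix_length_le hpy h2 (by simp)).eq_of_length (by simp)
        simp at h3
        exact absurd h3 hcase
      · obtain ⟨y', hy'⟩ := hpy
        rw [← hy', ← hr₂] at h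
        have := lt_of_lex_mid (g u) y' r₂ b (α u) hcase (by simpa using h)
        exact this.le
  have part2 : b < α u → g (u.tail ++ [b]) = [] := by
    intro hlt
    by_contra hne
    obtain ⟨hgvm, hgvv, _⟩ := hg _ hv
    obtain ⟨s', hs'eq, hs't⟩ := suffix_concat _ _ _ hne hgvv
    have hs'u : s' <:+ u := hs't.trans (List.tail_suffix u)
    have hs'm : s' <+: m := List.IsPrefix.trans ⟨[b], hs'eq.symm⟩ hgvm
    have hjk : s'.length ≤ (g u).length := hgumax s' hs'm hs'u
    have hs'gu : s' <:+ g u := List.suffix_of_suffix_length_le hs'u hguu hjk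
    obtain ⟨t, ht⟩ := hs'gu
    have hw : s' ++ α u :: r₂ <:+ m := ⟨t, by rw [← hr₂, ← ht]; simp⟩
    obtain ⟨z, hz, hpz⟩ := hext m hm _ hw
    obtain ⟨m'', hm''⟩ := hgvm
    rw [hs'eq] at hm''
    rcases hmax z hz with h | h
    · subst h
      have h2 : s' ++ [b] <+: z := ⟨m'', hm''⟩
      have h3 : s' ++ [α u] <+: z := List.IsPrefix.trans ⟨r₂, by simp⟩ hpz
      have h4 := (List.prefix_of_prefix_length_le h2 h3 (by simp)).eq_of_length (by simp)
      simp at h4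
      exact absurd h4 hlt.ne
    · obtain ⟨z', hz'⟩ := hpz
      rw [← hz', ← hm''] at h
      have := lt_of_lex_mid s' (r₂ ++ z') m'' (α u) b hlt.ne' (by simpa using h)
      exact absurd this (lt_asymm hlt)
  have part3 : b = α u → g (u.tail ++ [b]) = g u ++ [b] := by
    intro hbeq
    obtain ⟨hgvm, hgvv, hgvmax⟩ := hg _ hv
    have hgubm : g u ++ [b] <+: m := by rw [hbeq]; exact ⟨r₂, hr₂⟩
    have hlb : (g u ++ [b]).length ≤ (g (u.tail ++ [b])).length := hgvmax _ hgubm hguv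
    have hub : (g (u.tail ++ [b])).length ≤ (g u).length + 1 := by
      rcases eq_or_ne (g (u.tail ++ [b])) [] with h | h
      · simp [h]
      · obtain ⟨s', hs'eq, hs't⟩ := suffix_concat _ _ _ h hgvv
        have hs'u : s' <:+ u := hs't.trans (List.tail_suffix u)
        have hs'm : s' <+: m := List.IsPrefix.trans ⟨[b], hs'eq.symm⟩ hgvm
        have := hgumax s' hs'm hs'u
        rw [hs'eq]
        simp only [List.length_append, List.length_cons, List.length_nil]
        omega
    have hlen : (g (u.tail ++ [b])).length = (g u ++ [b]).length := by
      simp only [List.length_append, List.length_cons, List.length_nil] at hlb ⊢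
      omega
    exact (List.prefix_of_prefix_length_le hgvm hgubm hlen.le).eq_of_length hlen
  exact ⟨part1, part2, part3⟩
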